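/- Let a_t ≥ 0 and e_t ≥ 0 be sequences satisfying a_{t+1} ≤ (1 − μη_t/2)a_t − (μη_t/(2L))e_t + η_t²A + η_t³B with η_t = 8/(μ(a+t)) and weights w_t = (a+t)². Then with S_T = Σ_{t=0}^{T−1} w_t ≥ T³/3, one has (μ/(2L S_T)) Σ_{t=0}^{T−1} w_t e_t ≤ (μ a³/(8 S_T)) a_0 + (4T(T+2a)/(μ S_T)) A + (64T/(μ² S_T)) B. -/
import Mathlib

private lemma weighted_recursion_aux (x : ℝ) (hx : 1 ≤ x) :
    x^2*(x-4) ≤ (x-1)^3 := by nlinarith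


/-- Weighted-averaging recursion lemma: if
`a_{t+1} ≤ (1 - μη_t/2) a_t - (μη_t/(2L)) e_t + η_t² A + η_t³ B` with
`η_t = 8/(μ(c+t))` and weights `w_t = (c+t)²`, then `S_T = Σ w_t ≥ T³/3` and
`(μ/(2L S_T)) Σ w_t e_t ≤ (μc³/(8S_T)) a_0 + (4T(T+2c)/(μS_T)) A + (64T/(μ²S_T)) B`. -/
theorem weighted_recursion_lemma (μ L A B c : ℝ) (hμ : 0 < μ) (hL : 0 < L)
    (hA : 0 < A) (hB : 0 < B) (hc : 1 < c)
    (a e : ℕ → ℝ) (han : ∀ t, 0 ≤ a t) (hen : ∀ t, 0 ≤ e t)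
    (hrec : ∀ t : ℕ, a (t + 1) ≤
      (1 - μ * (8 / (μ * (c + t))) / 2) * a t
        - μ * (8 / (μ * (c + t))) / (2 * L) * e t
        + (8 / (μ * (c + t))) ^ 2 * A + (8 / (μ * (c + t))) ^ 3 * B)
    (T : ℕ) (hT : 0 < T) :
    ((T : ℝ) ^ 3 / 3 ≤ ∑ t ∈ Finset.range T, (c + t) ^ 2) ∧
    μ / (2 * L * ∑ t ∈ Finset.range T, (c + t) ^ 2) *
        ∑ t ∈ Finset.range T, (c + t) ^ 2 * e t ≤
      μ * c ^ 3 / (8 * ∑ t ∈ Finset.range T, (c + t) ^ 2) * a 0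
        + 4 * T * (T + 2 * c) / (μ * ∑ t ∈ Finset.range T, (c + t) ^ 2) * A
        + 64 * T / (μ ^ 2 * ∑ t ∈ Finset.range T, (c + t) ^ 2) * B := by
  have hc0 : (0:ℝ) < c := lt_trans one_pos hc
  have hμ' : μ ≠ 0 := hμ.ne'
  have hL' : L ≠ 0 := hL.ne'
  -- Part 1
  have part1 : ∀ n : ℕ, (n:ℝ)^3/3 ≤ ∑ t ∈ Finset.range n, (c + t)^2 := by
    intro n
    induction n with
    | zero => simp
    | succ n ih =>
      rw [Finset.sum_range_succ]
      push_cast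
      have hn : (0:ℝ) ≤ (n:ℝ) := Nat.cast_nonneg n
      nlinarith [ih, sq_nonneg ((n:ℝ))]
  have hS : (0:ℝ) < ∑ t ∈ Finset.range T, (c + t)^2 := by
    apply Finset.sum_pos
    · intro i _; positivity
    · exact Finset.nonempty_range_iff.mpr hT.ne'
  refine ⟨part1 T, ?_⟩
  -- key telescoping induction
  have key : ∀ n : ℕ, (∑ t ∈ Finset.range n, μ * (c + t)^2 / (2*L) * e t)
      + μ/8 * (c + n - 1)^3 * a n
      ≤ μ * c^3/8 * a 0 + (∑ t ∈ Finset.range n, 8*(c+t)/μ) * A + 64*n/μ^2*B := by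
    intro n
    induction n with
    | zero =>
      simp only [Finset.sum_range_zero, Nat.cast_zero]
      have h1 : (c - 1)^3 ≤ c^3 := by nlinarith
      have h2 : μ/8 * (c + 0 - 1)^3 ≤ μ * c^3/8 := by
        rw [add_zero]; nlinarith
      have h4 := mul_le_mul_of_nonneg_right h2 (han 0)
      ring_nf at h4 ⊢
      linarith
    | succ n ih =>
      have hcn : (0:ℝ) < c + n := by positivity
      have hcn' : c + (n:ℝ) ≠ 0 := hcn.ne'
      have hv : (0:ℝ) < μ/8 * (c+(n:ℝ))^3 := by positivity
      have hmul := mul_le_mul_of_nonneg_left (hrec n) hv.le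
      have e1 : μ/8*(c+(n:ℝ))^3 * ((1 - μ * (8 / (μ * (c + n))) / 2) * a n
          - μ * (8 / (μ * (c + n))) / (2 * L) * e n
          + (8 / (μ * (c + n))) ^ 2 * A + (8 / (μ * (c + n))) ^ 3 * B)
          = μ/8*(c+(n:ℝ))^2*(c+n-4) * a n - μ*(c+(n:ℝ))^2/(2*L) * e n
            + 8*(c+(n:ℝ))/μ * A + 64/μ^2 * B := by
        field_simp
        ring
      rw [e1] at hmul
      have h3 : μ/8*(c+(n:ℝ))^2*(c+n-4) * a n ≤ μ/8 * (c + n - 1)^3 * a n := by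
        have hcube : (c+(n:ℝ))^2*(c+n-4) ≤ (c + n - 1)^3 :=
          weighted_recursion_aux (c+(n:ℝ)) (by have := Nat.cast_nonneg (α := ℝ) n; linarith)
        have h4 : μ/8*((c+(n:ℝ))^2*(c+n-4)) ≤ μ/8*((c + (n:ℝ) - 1)^3) :=
          mul_le_mul_of_nonneg_left hcube (by positivity)
        have h5 := mul_le_mul_of_nonneg_right h4 (han n)
        linarith only [h5]
      rw [Finset.sum_range_succ, Finset.sum_range_succ]
      push_cast
      have hC3 : μ/8 * (c + ((n:ℝ) + 1) - 1)^3 * a (n + 1)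
          = μ/8 * (c + (n:ℝ))^3 * a (n + 1) := by ring
      have hRHS : μ * c^3/8 * a 0
            + ((∑ t ∈ Finset.range n, 8*(c+t)/μ) + 8*(c+(n:ℝ))/μ) * A
            + 64*((n:ℝ)+1)/μ^2*B
          = (μ * c^3/8 * a 0 + (∑ t ∈ Finset.range n, 8*(c+t)/μ) * A + 64*(n:ℝ)/μ^2*B)
            + (8*(c+(n:ℝ))/μ * A + 64/μ^2 * B) := by ring
      rw [hC3, hRHS]
      linarith only [ih, hmul, h3]
  -- drop the trailing nonnegative term
  have hterm : 0 ≤ μ/8 * (c + (T:ℝ) - 1)^3 * a T := by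
    have h1 : (0:ℝ) ≤ c + (T:ℝ) - 1 := by
      have := Nat.cast_nonneg (α := ℝ) T; linarith
    have := han T
    positivity
  have keyT := key T
  -- bound the A-sum
  have hAsum : ∀ n : ℕ, (∑ t ∈ Finset.range n, 8*(c+t)/μ) ≤ 4*n*(n+2*c)/μ := by
    intro n
    induction n with
    | zero => simp
    | succ n ih =>
      rw [Finset.sum_range_succ]
      push_cast
      have h : (4*(n:ℝ)*(n+2*c) + 8*(c+n))/μ ≤ 4*((n:ℝ)+1)*(((n:ℝ)+1)+2*c)/μ :=
        (div_le_div_iff_of_pos_right hμ).mpr (by nlinarith)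
      have hsplit : (4*(n:ℝ)*(n+2*c) + 8*(c+n))/μ
          = 4*(n:ℝ)*(n+2*c)/μ + 8*(c+(n:ℝ))/μ := by ring
      linarith only [ih, h, hsplit]
  have hA2 : (∑ t ∈ Finset.range T, 8*(c+t)/μ) * A ≤ 4*T*(T+2*c)/μ * A :=
    mul_le_mul_of_nonneg_right (hAsum T) hA.le
  have main : μ/(2*L) * ∑ t ∈ Finset.range T, (c+t)^2 * e t
      ≤ μ*c^3/8 * a 0 + 4*T*(T+2*c)/μ * A + 64*T/μ^2 * B := by
    have hL2 : μ/(2*L) * ∑ t ∈ Finset.range T, (c+t)^2 * e t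
        = ∑ t ∈ Finset.range T, μ*(c+t)^2/(2*L) * e t := by
      rw [Finset.mul_sum]; exact Finset.sum_congr rfl (fun t _ => by ring)
    rw [hL2]; linarith
  have hdiv := (div_le_div_iff_of_pos_right hS).mpr main
  have hS' : (∑ t ∈ Finset.range T, (c+(t:ℝ))^2) ≠ 0 := hS.ne'
  calc μ / (2 * L * ∑ t ∈ Finset.range T, (c + t) ^ 2) *
        ∑ t ∈ Finset.range T, (c + t) ^ 2 * e t
      = (μ/(2*L) * ∑ t ∈ Finset.range T, (c+t)^2 * e t)
          / (∑ t ∈ Finset.range T, (c+t)^2) := by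
        ring
    _ ≤ (μ*c^3/8 * a 0 + 4*T*(T+2*c)/μ * A + 64*T/μ^2 * B)
          / (∑ t ∈ Finset.range T, (c+t)^2) := hdiv
    _ = μ * c ^ 3 / (8 * ∑ t ∈ Finset.range T, (c + t) ^ 2) * a 0
        + 4 * T * (T + 2 * c) / (μ * ∑ t ∈ Finset.range T, (c + t) ^ 2) * A
        + 64 * T / (μ ^ 2 * ∑ t ∈ Finset.range T, (c + t) ^ 2) * B := by
        ring
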